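/- Let N be a standard Gaussian random variable. For every n ∈ ℕ, the determinant of the Hankel moment matrix of N satisfies det M_{N,n} = Π_{k=1}^{n} k!. -/

import Mathlib

open MeasureTheory ProbabilityTheory

open Matrix

/-- The Hankel moment matrix `M_{N,n} = (E[N^{i+j}])_{0 ≤ i,j ≤ n}`. -/
noncomputable def hankelMoment {Ω : Type*} [MeasurableSpace Ω] (P : Measure Ω)
    (Y : Ω → ℝ) (n : ℕ) : Matrix (Fin (n + 1)) (Fin (n + 1)) ℝ :=
  Matrix.of fun i j => ∫ ω, Y ω ^ ((i : ℕ) + (j : ℕ)) ∂P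

section Aux

open Real Set


/-- Moments of the standard Gaussian, as natural numbers: `gm (2k) = (2k-1)!!`, `gm (2k+1) = 0`. -/
def gm : ℕ → ℕ
  | 0 => 1
  | 1 => 0
  | (p+2) => (p+1) * gm p

lemma gm_two_mul (k : ℕ) : gm (2 * k) * (2 ^ k * k.factorial) = (2 * k).factorial := by
  induction k with
  | zero => simp [gm]
  | succ k ih =>
      have h2 : 2 * (k + 1) = 2 * k + 2 := by ring
      rw [h2, gm, show 2*k+2 = (2*k+1)+1 from rfl, Nat.factorial_succ, Nat.factorial_succ,
        Nat.factorial_succ, pow_succ]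
      rw [← ih]
      ring

lemma gm_odd (k : ℕ) : gm (2 * k + 1) = 0 := by
  induction k with
  | zero => rfl
  | succ k ih =>
      have : 2 * (k + 1) + 1 = (2 * k + 1) + 2 := by ring
      rw [this, gm, ih, mul_zero]

/-- The Wick pairing term. -/
def wt (i j k : ℕ) : ℕ := i.choose k * j.choose k * k.factorial * gm (i - k) * gm (j - k)

def ws (i j : ℕ) : ℕ := ∑ k ∈ Finset.range (i + 1), wt i j k

lemma wt_eq_zero_left {i j k : ℕ} (h : i < k) : wt i j k = 0 := by
  simp [wt, Nat.choose_eq_zero_of_lt h]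

lemma ws_eq_sum {i j M : ℕ} (h : i + 1 ≤ M) :
    ∑ k ∈ Finset.range M, wt i j k = ws i j := by
  rw [ws, ← Finset.sum_subset (Finset.range_subset_range.2 h)]
  intro x _ hx
  exact wt_eq_zero_left (by simpa using hx)

lemma ws_zero_left (j : ℕ) : ws 0 j = gm j := by simp [ws, wt, gm]

lemma ws_zero_right (i : ℕ) : ws i 0 = gm i := by
  rw [ws]
  rw [Finset.sum_eq_single 0]
  · simp [wt, gm]
  · intro k _ hk
    simp [wt, Nat.choose_eq_zero_of_lt (Nat.pos_of_ne_zero hk), gm]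
  · simp

lemma gm_succ_succ (p : ℕ) : gm (p + 2) = (p + 1) * gm p := rfl

lemma gm_step {a b : ℕ} (h : a = b + 2) : gm a = (b + 1) * gm b := by
  rw [h, gm_succ_succ]

lemma gm_shift {i k : ℕ} (hk : k ≤ i) : gm (i + 1 - k) = (i - k) * gm (i - 1 - k) := by
  rcases eq_or_lt_of_le hk with rfl | h
  · simp [gm]
  · have h1 : i + 1 - k = (i - 1 - k) + 2 := by omega
    rw [gm_step h1]
    congr 1
    omega

lemma choose_shift (i k : ℕ) : i.choose k * (i - k) = i * (i - 1).choose k := by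
  rcases i with _ | i'
  · simp
  · have h := Nat.choose_mul_succ_eq i' k
    simp only [Nat.succ_sub_one]
    calc (i' + 1).choose k * (i' + 1 - k) = i'.choose k * (i' + 1) := h.symm
      _ = (i' + 1) * i'.choose k := by ring

lemma mul_rearrA {a b c d e f g h : ℕ} (hx : a * d = e * f) :
    a * b * c * (d * g) * h = e * (f * b * c * g * h) := by
  calc a * b * c * (d * g) * h = (a * d) * (b * c * g * h) := by ring
    _ = (e * f) * (b * c * g * h) := by rw [hx]
    _ = e * (f * b * c * g * h) := by ring

lemma mul_rearrB {a b c d e f g j : ℕ} (hx : b * c = j * g) :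
    a * b * (c * d) * e * f = j * (a * g * d * e * f) := by
  calc a * b * (c * d) * e * f = (b * c) * (a * d * e * f) := by ring
    _ = (j * g) * (a * d * e * f) := by rw [hx]
    _ = j * (a * g * d * e * f) := by ring

lemma ws_rec (i j : ℕ) : ws (i + 1) j = i * ws (i - 1) j + j * ws i (j - 1) := by
  have hA : ∀ k ∈ Finset.range (i + 1),
      i.choose k * j.choose k * k.factorial * gm (i + 1 - k) * gm (j - k)
        = i * wt (i - 1) j k := by
    intro k hk
    have hk' : k ≤ i := by simpa using Nat.lt_succ_iff.mp (Finset.mem_range.mp hk)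
    rw [gm_shift hk', wt]
    exact mul_rearrA (choose_shift i k)
  have hB : ∀ k ∈ Finset.range (i + 1),
      i.choose k * j.choose (k+1) * (k+1).factorial * gm (i - k) * gm (j - (k+1))
        = j * wt i (j - 1) k := by
    intro k _
    rw [wt]
    have h1 : j.choose (k+1) * (k+1) = j.choose k * (j - k) := Nat.choose_succ_right_eq j k
    have h2 : j.choose k * (j - k) = j * (j-1).choose k := choose_shift j k
    have h3 : (k+1).factorial = (k+1) * k.factorial := rfl
    have h4 : j - (k+1) = (j - 1) - k := by omega
    rw [h4, h3]
    exact mul_rearrB (h1.trans h2)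
  have key : ws (i+1) j
      = (∑ k ∈ Finset.range (i + 1),
          i.choose k * j.choose k * k.factorial * gm (i + 1 - k) * gm (j - k))
        + ∑ k ∈ Finset.range (i + 1),
          i.choose k * j.choose (k+1) * (k+1).factorial * gm (i - k) * gm (j - (k+1)) := by
    rw [ws, Finset.sum_range_succ' (fun k => wt (i+1) j k)]
    have hsplit : ∀ k, wt (i+1) j (k+1)
        = i.choose (k+1) * j.choose (k+1) * (k+1).factorial * gm (i + 1 - (k+1)) * gm (j - (k+1))
          + i.choose k * j.choose (k+1) * (k+1).factorial * gm (i - k) * gm (j - (k+1)) := by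
      intro k
      rw [wt, Nat.choose_succ_succ]
      have : i + 1 - (k + 1) = i - k := by omega
      rw [this]
      ring
    simp only [hsplit]
    rw [Finset.sum_add_distrib]
    have h0 : wt (i+1) j 0
        = i.choose 0 * j.choose 0 * Nat.factorial 0 * gm (i + 1 - 0) * gm (j - 0) := by
      simp [wt]
    rw [h0]
    have hAsum : (∑ k ∈ Finset.range (i + 1),
        i.choose (k+1) * j.choose (k+1) * (k+1).factorial * gm (i + 1 - (k+1)) * gm (j - (k+1)))
        + i.choose 0 * j.choose 0 * Nat.factorial 0 * gm (i + 1 - 0) * gm (j - 0)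
        = ∑ k ∈ Finset.range (i + 2),
            i.choose k * j.choose k * k.factorial * gm (i + 1 - k) * gm (j - k) := by
      rw [Finset.sum_range_succ'
        (fun k => i.choose k * j.choose k * k.factorial * gm (i + 1 - k) * gm (j - k)) (i+1)]
    have hdrop : ∑ k ∈ Finset.range (i + 2),
            i.choose k * j.choose k * k.factorial * gm (i + 1 - k) * gm (j - k)
        = ∑ k ∈ Finset.range (i + 1),
            i.choose k * j.choose k * k.factorial * gm (i + 1 - k) * gm (j - k) := by
      rw [Finset.sum_range_succ, Nat.choose_eq_zero_of_lt (Nat.lt_succ_self i)]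
      simp
    omega
  rw [key, Finset.sum_congr rfl hA, Finset.sum_congr rfl hB, ← Finset.mul_sum, ← Finset.mul_sum]
  rw [ws_eq_sum (show (i - 1) + 1 ≤ i + 1 by omega), ws_eq_sum (show i + 1 ≤ i + 1 by omega)]

lemma ws_eq_gm_aux : ∀ n i j, i + j = n → ws i j = gm (i + j) := by
  intro n
  induction n using Nat.strong_induction_on with
  | _ n ih =>
  intro i j hn
  rcases i with _ | i'
  · simpa using ws_zero_left j
  rcases j with _ | j'
  · simpa using ws_zero_right (i' + 1)
  rw [ws_rec]
  have h1 : ws (i' - 1) (j' + 1) = gm (i' - 1 + (j' + 1)) := ih _ (by omega) _ _ rfl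
  have h2 : ws i' (j' + 1 - 1) = gm (i' + (j' + 1 - 1)) := ih _ (by omega) _ _ rfl
  rw [h1, h2]
  rcases Nat.eq_zero_or_pos i' with rfl | hi
  · simp only [Nat.zero_mul, Nat.zero_add, zero_add]
    rw [gm_step (show 0 + 1 + (j' + 1) = j' + 2 by omega)]
    norm_num
  · rw [gm_step (show i' + 1 + (j' + 1) = (i' + j') + 2 by omega)]
    have e1 : i' - 1 + (j' + 1) = i' + j' := by omega
    have e2 : i' + (j' + 1 - 1) = i' + j' := by omega
    rw [e1, e2]
    ring

lemma ws_eq_gm (i j : ℕ) : ws i j = gm (i + j) := ws_eq_gm_aux (i + j) i j rfl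

open MeasureTheory ProbabilityTheory Real Set

lemma Gamma_nat_add_half (k : ℕ) :
    Real.Gamma (k + 1/2) = (2*k).factorial * Real.sqrt π / (4^k * k.factorial) := by
  induction k with
  | zero => simpa using Real.Gamma_one_half_eq
  | succ k ih =>
      have hne : (k : ℝ) + 1/2 ≠ 0 := by positivity
      have : ((k : ℝ) + 1) + 1/2 = ((k : ℝ) + 1/2) + 1 := by ring
      rw [Nat.cast_succ, this, Real.Gamma_add_one hne, ih]
      have h4 : (4:ℝ)^k ≠ 0 := by positivity
      have hf : (k.factorial : ℝ) ≠ 0 := Nat.cast_ne_zero.2 k.factorial_ne_zero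
      have e1 : (2*(k+1)).factorial = (2*k+2) * ((2*k+1) * (2*k).factorial) := by
        rw [show 2*(k+1) = (2*k+1)+1 by ring, Nat.factorial_succ, Nat.factorial_succ]
      have e2 : (k+1).factorial = (k+1) * k.factorial := rfl
      rw [e1, e2]
      push_cast
      field_simp
      ring

/-- The even moment over the real line. -/
lemma integral_pow_mul_gaussian (k : ℕ) :
    ∫ x : ℝ, (Real.sqrt (2 * π))⁻¹ * rexp (- x^2 / 2) * x ^ (2*k)
      = (2*k).factorial / (2^k * k.factorial) := by
  have hf : ∀ x : ℝ, (Real.sqrt (2 * π))⁻¹ * rexp (- x^2 / 2) * x ^ (2*k)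
      = (fun t : ℝ => (Real.sqrt (2 * π))⁻¹ * (t ^ ((2*k : ℕ) : ℝ) * rexp (- (1/2) * t ^ (2:ℝ)))) |x| := by
    intro x
    have h1 : |x| ^ ((2*k : ℕ) : ℝ) = x ^ (2*k) := by
      rw [Real.rpow_natCast, pow_mul, pow_mul, sq_abs]
    have h2 : |x| ^ (2:ℝ) = x ^ 2 := by
      rw [show (2:ℝ) = ((2:ℕ):ℝ) by norm_num, Real.rpow_natCast, sq_abs]
    simp only [h1, h2]
    ring_nf
  rw [show (fun x : ℝ => (Real.sqrt (2 * π))⁻¹ * rexp (- x^2 / 2) * x ^ (2*k))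
      = (fun x : ℝ => (fun t : ℝ => (Real.sqrt (2 * π))⁻¹ *
          (t ^ ((2*k : ℕ) : ℝ) * rexp (- (1/2) * t ^ (2:ℝ)))) |x|) from funext hf,
    integral_comp_abs (f := fun t : ℝ => (Real.sqrt (2 * π))⁻¹ *
          (t ^ ((2*k : ℕ) : ℝ) * rexp (- (1/2) * t ^ (2:ℝ))))]
  rw [MeasureTheory.integral_const_mul]
  rw [integral_rpow_mul_exp_neg_mul_rpow (by norm_num : (0:ℝ) < 2)
    (lt_of_lt_of_le (by norm_num) (Nat.cast_nonneg _) : (-1 : ℝ) < ((2*k : ℕ) : ℝ))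
    (by norm_num : (0:ℝ) < 1/2)]
  have hgam : (((2*k : ℕ):ℝ) + 1) / 2 = k + 1/2 := by push_cast; ring
  rw [hgam, _root_.Gamma_nat_add_half]
  have h2 : (0:ℝ) ≤ 2 := by norm_num
  have hh : ((1:ℝ)/2) ^ (-(((2*k : ℕ):ℝ) + 1) / 2) = (2:ℝ) ^ (k:ℕ) * Real.sqrt 2 := by
    rw [one_div, Real.inv_rpow h2, ← Real.rpow_neg h2,
      show -(-((((2*k : ℕ):ℝ)) + 1) / 2) = (k:ℝ) + 1/2 by push_cast; ring,
      Real.rpow_add (by norm_num), ← Real.sqrt_eq_rpow, Real.rpow_natCast]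
  rw [hh, Real.sqrt_mul h2 π, show (4:ℝ)^k = 2^k * 2^k by rw [← mul_pow]; norm_num]
  have s2 : Real.sqrt 2 * Real.sqrt 2 = 2 := Real.mul_self_sqrt h2
  have sp : (0:ℝ) < Real.sqrt π := Real.sqrt_pos.2 pi_pos
  have s2p : (0:ℝ) < Real.sqrt 2 := Real.sqrt_pos.2 (by norm_num)
  have hp2 : (0:ℝ) < (2:ℝ)^k := by positivity
  have hfk : (0:ℝ) < (k.factorial : ℝ) := by exact_mod_cast k.factorial_pos
  field_simp


lemma integral_fun_gaussianReal (g : ℝ → ℝ) :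
    ∫ x, g x ∂(gaussianReal 0 1) = ∫ x, gaussianPDFReal 0 1 x * g x := by
  rw [gaussianReal_of_var_ne_zero 0 one_ne_zero, gaussianPDF_def]
  have : (fun x => ENNReal.ofReal (gaussianPDFReal 0 1 x))
      = fun x => (((fun y => (gaussianPDFReal 0 1 y).toNNReal) x : NNReal) : ENNReal) := rfl
  rw [this, integral_withDensity_eq_integral_smul
    ((measurable_gaussianPDFReal 0 1).real_toNNReal) g]
  congr 1
  ext x
  rw [NNReal.smul_def, Real.coe_toNNReal _ (gaussianPDFReal_nonneg 0 1 x), smul_eq_mul]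

lemma gaussianPDFReal_std (x : ℝ) :
    gaussianPDFReal 0 1 x = (Real.sqrt (2 * π))⁻¹ * rexp (- x^2 / 2) := by
  simp [gaussianPDFReal_def]

lemma integral_pow_gaussianReal_even (k : ℕ) :
    ∫ x, x ^ (2*k) ∂(gaussianReal 0 1)
      = ((2*k).factorial : ℝ) / (2^k * (k.factorial : ℝ)) := by
  rw [integral_fun_gaussianReal (fun x => x ^ (2*k)),
    ← integral_pow_mul_gaussian k]
  congr 1
  ext x
  rw [gaussianPDFReal_std]

lemma integral_pow_gaussianReal_odd (k : ℕ) :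
    ∫ x, x ^ (2*k+1) ∂(gaussianReal 0 1) = 0 := by
  have hmap : (gaussianReal 0 1).map ((-1 : ℝ) * ·) = gaussianReal 0 1 := by
    rw [gaussianReal_map_const_mul (-1 : ℝ)]
    norm_num
  have h1 : ∫ x, x ^ (2*k+1) ∂(gaussianReal 0 1)
      = ∫ x, ((-1 : ℝ) * x) ^ (2*k+1) ∂(gaussianReal 0 1) := by
    nth_rewrite 1 [← hmap]
    rw [integral_map (by fun_prop) (by fun_prop)]
  have h2 : ∀ x : ℝ, ((-1 : ℝ) * x) ^ (2*k+1) = - (x ^ (2*k+1)) := by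
    intro x
    rw [neg_one_mul]
    exact Odd.neg_pow ⟨k, by ring⟩ x
  simp only [h2, integral_neg] at h1
  linarith

lemma integral_pow_gaussianReal (p : ℕ) :
    ∫ x, x ^ p ∂(gaussianReal 0 1) = (gm p : ℝ) := by
  rcases Nat.even_or_odd p with ⟨k, hk⟩ | ⟨k, hk⟩
  · subst hk
    rw [show k + k = 2 * k by ring, integral_pow_gaussianReal_even]
    have h := gm_two_mul k
    have h2 : ((gm (2*k) : ℝ)) * (2^k * (k.factorial : ℝ)) = ((2*k).factorial : ℝ) := by
      exact_mod_cast congrArg (Nat.cast : ℕ → ℝ) h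
    have hpos : (0:ℝ) < 2^k * (k.factorial : ℝ) := by positivity
    field_simp [← h2]
    rw [← h2]; ring
  · subst hk
    rw [integral_pow_gaussianReal_odd, show gm (2*k+1) = 0 from gm_odd k]
    norm_num

lemma prod_fact_range (n : ℕ) :
    ∏ k ∈ Finset.range (n+1), ((k.factorial : ℝ))
      = ∏ k ∈ Finset.Icc 1 n, ((k.factorial : ℝ)) := by
  induction n with
  | zero => simp
  | succ n ih =>
      rw [Finset.prod_range_succ, ih, Finset.prod_Icc_succ_top (Nat.succ_le_succ (Nat.zero_le n))]

end Aux

/-- For a standard Gaussian `N`, `det M_{N,n} = ∏_{k=1}^n k!`. -/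
theorem det_hankelMoment_gaussian
    {Ω : Type*} [MeasurableSpace Ω] (P : Measure Ω) [IsProbabilityMeasure P]
    (N : Ω → ℝ) (hNm : Measurable N)
    (hN : Measure.map N P = gaussianReal 0 1) (n : ℕ) :
    (hankelMoment P N n).det = ∏ k ∈ Finset.Icc 1 n, (Nat.factorial k : ℝ) := by
  have hmom : ∀ p : ℕ, ∫ ω, N ω ^ p ∂P = (gm p : ℝ) := by
    intro p
    have h1 : ∫ x, x ^ p ∂(Measure.map N P) = ∫ ω, N ω ^ p ∂P :=
      integral_map hNm.aemeasurable ((measurable_id.pow_const p).aestronglyMeasurable)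
    rw [← h1, hN, integral_pow_gaussianReal]
  set L : Matrix (Fin (n+1)) (Fin (n+1)) ℝ :=
    Matrix.of (fun i k : Fin (n+1) => (((i:ℕ).choose (k:ℕ) : ℕ) : ℝ) * (gm ((i:ℕ) - (k:ℕ)) : ℝ))
    with hL
  set D : Matrix (Fin (n+1)) (Fin (n+1)) ℝ :=
    Matrix.diagonal (fun k : Fin (n+1) => (((k:ℕ).factorial : ℕ) : ℝ)) with hD
  have hfact : hankelMoment P N n = L * D * Lᵀ := by
    ext i j
    show (∫ ω, N ω ^ ((i:ℕ) + (j:ℕ)) ∂P) = (L * D * Lᵀ) i j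
    rw [hmom]
    have hnat : gm ((i:ℕ) + (j:ℕ)) = ∑ k ∈ Finset.range (n+1), wt (i:ℕ) (j:ℕ) k := by
      rw [← ws_eq_gm, ← ws_eq_sum (Nat.succ_le_succ (Nat.le_of_lt_succ i.isLt))]
    have hRHS : (L * D * Lᵀ) i j = ∑ k ∈ Finset.range (n+1),
        ((((i:ℕ).choose k : ℕ) : ℝ) * ((gm ((i:ℕ) - k) : ℕ) : ℝ)
          * (((Nat.factorial k : ℕ)) : ℝ)
          * ((((j:ℕ).choose k : ℕ) : ℝ) * ((gm ((j:ℕ) - k) : ℕ) : ℝ))) := by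
      have h1 : (L * D * Lᵀ) i j
          = ∑ k : Fin (n+1), L i k * (((k:ℕ).factorial : ℕ) : ℝ) * L j k := by
        rw [Matrix.mul_apply]
        simp only [hD, Matrix.mul_diagonal, Matrix.transpose_apply]
      rw [h1, ← Fin.sum_univ_eq_sum_range (fun k : ℕ =>
        ((((i:ℕ).choose k : ℕ) : ℝ) * ((gm ((i:ℕ) - k) : ℕ) : ℝ)
          * (((Nat.factorial k : ℕ)) : ℝ)
          * ((((j:ℕ).choose k : ℕ) : ℝ) * ((gm ((j:ℕ) - k) : ℕ) : ℝ)))) (n+1)]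
      refine Finset.sum_congr rfl fun k _ => ?_
      simp only [hL, Matrix.of_apply]
    rw [hRHS, hnat, Nat.cast_sum]
    apply Finset.sum_congr rfl
    intro k _
    rw [wt]
    push_cast
    ring
  rw [hfact, Matrix.det_mul, Matrix.det_mul, Matrix.det_transpose]
  have hLdet : L.det = 1 := by
    rw [Matrix.det_of_lowerTriangular L (fun i j hij => by
      simp only [hL, Matrix.of_apply]
      have : (i:ℕ) < (j:ℕ) := hij
      rw [Nat.choose_eq_zero_of_lt this]
      simp)]
    simp [hL, gm]
  have hDdet : D.det = ∏ k ∈ Finset.Icc 1 n, (Nat.factorial k : ℝ) := by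
    rw [hD, Matrix.det_diagonal, ← prod_fact_range,
      Fin.prod_univ_eq_prod_range (fun k => ((Nat.factorial k : ℕ) : ℝ))]
  rw [hLdet, hDdet]
  ring
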